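/- The map D_u from functions on Fin n × Fin n to n×n complex matrices is a unitary isomorphism: it is a complex-linear bijection, and for all f, g : Fin n × Fin n → ℂ, ⟨D_u f, D_u g⟩_HS = ⟨f, g⟩_u. -/

import Mathlib

open Finset Matrix

/-- The symbol-to-operator map `D_u`. -/
noncomputable def Dmap {ι : Type*} [Fintype ι] (u : Matrix ι ι ℂ) (f : ι × ι → ℂ) :
    Matrix ι ι ℂ :=
  fun k k' => ∑ l, u k l * f (k', l) * (starRingEnd ℂ) (u k' l)

/-- The Hermitian product `⟨f,g⟩_u` on functions on `ι × ι`. -/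
noncomputable def innerU {ι : Type*} [Fintype ι] (u : Matrix ι ι ℂ) (f g : ι × ι → ℂ) : ℂ :=
  ∑ k, ∑ l, f (k, l) * (starRingEnd ℂ) (g (k, l)) * ((‖u k l‖) ^ 2 : ℝ)

/-- The Hilbert–Schmidt Hermitian product on matrices. -/
noncomputable def innerHS {ι : Type*} [Fintype ι] (X Y : Matrix ι ι ℂ) : ℂ :=
  (X * Yᴴ).trace

/-- Auxiliary matrix: `(M u f) l k' = f (k', l) * conj (u k' l)`. -/
noncomputable def Maux {ι : Type*} [Fintype ι] (u : Matrix ι ι ℂ) (f : ι × ι → ℂ) :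
    Matrix ι ι ℂ :=
  Matrix.of fun l k' => f (k', l) * (starRingEnd ℂ) (u k' l)

lemma Dmap_eq {ι : Type*} [Fintype ι] (u : Matrix ι ι ℂ) (f : ι × ι → ℂ) :
    Dmap u f = u * Maux u f := by
  ext k k'
  simp [Dmap, Maux, Matrix.mul_apply, mul_assoc]

/-- `D_u` is a unitary isomorphism from `(F(M), ⟨·,·⟩_u)` to
`(End F(K), ⟨·,·⟩_HS)`: it is a complex-linear bijection preserving the Hermitian products. -/
theorem stmt1 (n : ℕ) (hn : 1 ≤ n) (u : Matrix (Fin n) (Fin n) ℂ)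
    (hu : u * uᴴ = 1) (hne : ∀ k l, u k l ≠ 0) :
    Function.Bijective (Dmap u) ∧
    (∀ f g : Fin n × Fin n → ℂ, Dmap u (f + g) = Dmap u f + Dmap u g) ∧
    (∀ (c : ℂ) (f : Fin n × Fin n → ℂ), Dmap u (c • f) = c • Dmap u f) ∧
    (∀ f g : Fin n × Fin n → ℂ, innerHS (Dmap u f) (Dmap u g) = innerU u f g) := by
  have huu : uᴴ * u = 1 := mul_eq_one_comm.mp hu
  refine ⟨?_, ?_, ?_, ?_⟩
  · -- bijective: explicit inverse
    refine Function.bijective_iff_has_inverse.mpr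
      ⟨fun X p => ((uᴴ * X) p.2 p.1) / (starRingEnd ℂ) (u p.1 p.2), ?_, ?_⟩
    · intro f
      funext p
      obtain ⟨k', l⟩ := p
      have h1 : uᴴ * Dmap u f = Maux u f := by
        rw [Dmap_eq, ← Matrix.mul_assoc, huu, Matrix.one_mul]
      simp only [h1, Maux, Matrix.of_apply]
      exact mul_div_cancel_right₀ _ (by simpa using hne k' l)
    · intro X
      have h2 : Maux u (fun p => ((uᴴ * X) p.2 p.1) / (starRingEnd ℂ) (u p.1 p.2))
          = uᴴ * X := by
        ext l k'
        simp only [Maux, Matrix.of_apply]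
        exact div_mul_cancel₀ _ (by simpa using hne k' l)
      rw [Dmap_eq, h2, ← Matrix.mul_assoc, hu, Matrix.one_mul]
  · intro f g
    ext k k'
    simp [Dmap, Finset.sum_add_distrib, mul_add, add_mul]
  · intro c f
    ext k k'
    simp [Dmap, Finset.mul_sum, mul_comm, mul_left_comm, mul_assoc]
  · intro f g
    rw [Dmap_eq, Dmap_eq]
    have hcyc : innerHS (u * Maux u f) (u * Maux u g) = innerHS (Maux u f) (Maux u g) := by
      unfold innerHS
      rw [Matrix.conjTranspose_mul, Matrix.trace_mul_comm, Matrix.mul_assoc,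
        ← Matrix.mul_assoc uᴴ, huu, Matrix.one_mul, Matrix.trace_mul_comm]
    rw [hcyc]
    unfold innerHS innerU
    rw [Matrix.trace]
    rw [Finset.sum_comm]
    refine Finset.sum_congr rfl fun k' _ => ?_
    simp only [Matrix.diag_apply, Matrix.mul_apply, Matrix.conjTranspose_apply, Maux,
      Matrix.of_apply]
    refine Finset.sum_congr rfl fun l _ => ?_
    have h : (starRingEnd ℂ) (u l k') * u l k' = ((‖u l k'‖) ^ 2 : ℝ) := by
      rw [mul_comm, Complex.mul_conj, Complex.sq_norm]
    rw [← h]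
    simp only [star_mul', Complex.star_def, Complex.conj_conj]
    ring
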